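/- arXiv:1904.04951 — 3 statements merged into one kernel-verified Lean document; each statement's English description precedes it below -/
import Mathlib

section
/- Consider the semi-implicit Euler scheme nᶠ_{k+1} = (nᶠ_k + Δt·π_cf(a_k)) / (1 + Δt·(π_fc(a_k) + π_cf(a_k))) and nᶜ_{k+1} = (nᶜ_k + Δt·π_fc(a_k)) / (1 + Δt·(π_fc(a_k) + π_cf(a_k))), where π_cf(a_k), π_fc(a_k) > 0. If nᶠ_0 ≥ 0, nᶜ_0 ≥ 0 and nᶠ_0 + nᶜ_0 = 1, then for every k ∈ ℕ and every Δt > 0: nᶠ_k ≥ 0, nᶜ_k ≥ 0, and nᶠ_k + nᶜ_k = 1. -/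
/-- The semi-implicit Euler scheme for the Franke-Westerhoff agent shares
preserves nonnegativity and the normalization `nᶠ + nᶜ = 1` for every step
size `Δt > 0` and strictly positive switching rates. -/
theorem semi_implicit_simplex_invariance
    (Δt : ℝ) (hΔt : 0 < Δt)
    (πcf πfc : ℕ → ℝ) (hπcf : ∀ k, 0 < πcf k) (hπfc : ∀ k, 0 < πfc k)
    (nf nc : ℕ → ℝ)
    (hnf0 : 0 ≤ nf 0) (hnc0 : 0 ≤ nc 0) (hsum0 : nf 0 + nc 0 = 1)
    (hnf : ∀ k, nf (k + 1) =
      (nf k + Δt * πcf k) / (1 + Δt * (πfc k + πcf k)))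
    (hnc : ∀ k, nc (k + 1) =
      (nc k + Δt * πfc k) / (1 + Δt * (πfc k + πcf k))) :
    ∀ k, 0 ≤ nf k ∧ 0 ≤ nc k ∧ nf k + nc k = 1 := by
  intro k
  induction k with
  | zero => exact ⟨hnf0, hnc0, hsum0⟩
  | succ k ih =>
    obtain ⟨h1, h2, h3⟩ := ih
    have hd : 0 < 1 + Δt * (πfc k + πcf k) := by
      have := hπcf k; have := hπfc k; nlinarith
    refine ⟨?_, ?_, ?_⟩
    · rw [hnf]
      apply div_nonneg _ hd.le
      have := hπcf k; nlinarith
    · rw [hnc]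
      apply div_nonneg _ hd.le
      have := hπfc k; nlinarith
    · rw [hnf, hnc, ← add_div, div_eq_one_iff_eq hd.ne']
      linarith
end

section
/- Let r > 0 and let Z : [0,∞) → ℝ_{≥0} be continuously differentiable with |Z'(t)| ≤ B for some B > 0. Let γᵢ ∈ (0,1) and wᵢ⁰ > 0 for i = 1,…,N. Then the ODE system ẇᵢ(t) = r·wᵢ(t) + γᵢ·wᵢ(t)·Z(t) / ((1/N)·Σⱼ (1−γⱼ)·γⱼ·wⱼ(t)), wᵢ(0) = wᵢ⁰, has a unique solution on [0,∞), and along this solution (1/N)·Σⱼ (1−γⱼ)·γⱼ·wⱼ(t) ≥ (1/N)·Σⱼ (1−γⱼ)·γⱼ·wⱼ(0) > 0 for all t ≥ 0. -/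
open BigOperators


open Set Filter Function

theorem lls_inv_aux (H F : ℝ → ℝ) (hd : ∀ x, HasStrictDerivAt H (F x) x)
    (hFpos : ∀ x, 0 < F x) (hrange : Set.range H = Set.Ioi 0) :
    (∀ x, Function.invFun H (H x) = x) ∧
    (∀ y, 0 < y → H (Function.invFun H y) = y) ∧
    (∀ y, 0 < y → HasDerivAt (Function.invFun H) (F (Function.invFun H y))⁻¹ y) := by
  have hmono : StrictMono H := by
    apply strictMono_of_deriv_pos
    intro x
    rw [(hd x).hasDerivAt.deriv]
    exact hFpos x
  have hinj : Function.Injective H := hmono.injective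
  have hleft : ∀ x, Function.invFun H (H x) = x := fun x => hinj (Function.invFun_eq ⟨x, rfl⟩)
  have hright : ∀ y, 0 < y → H (Function.invFun H y) = y := by
    intro y hy
    have : y ∈ Set.range H := by rw [hrange]; exact hy
    exact Function.invFun_eq this
  refine ⟨hleft, hright, ?_⟩
  intro y hy
  set x := Function.invFun H y with hx
  have hxy : H x = y := hright y hy
  have hF : F x ≠ 0 := (hFpos x).ne'
  have hloc := (hd x).to_localInverse (f := H) (hf' := hF)
  rw [hxy] at hloc
  have hev : Function.invFun H =ᶠ[nhds y] ((hd x).localInverse H (F x) x hF) := by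
    have h1 : ∀ᶠ z in nhds y, H (((hd x).hasStrictFDerivAt_equiv hF).localInverse H _ x z) = z := by
      have := ((hd x).hasStrictFDerivAt_equiv hF).eventually_right_inverse
      rwa [hxy] at this
    filter_upwards [h1, eventually_gt_nhds hy] with z hz hzpos
    exact hinj (by rw [hright z hzpos, hz])
  exact hloc.hasDerivAt.congr_of_eventuallyEq hev


open Set Filter Function Real

theorem lls_exp_sum_aux {N : ℕ} (hN : 0 < N) (a k : Fin N → ℝ)
    (ha : ∀ i, 0 < a i) (hk : ∀ i, 0 < k i) :
    (∀ x, HasStrictDerivAt (fun x => ∑ j, a j * Real.exp (k j * x))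
      (∑ j, (a j * k j) * Real.exp (k j * x)) x) ∧
    (∀ x, 0 < ∑ j, a j * Real.exp (k j * x)) ∧
    Set.range (fun x => ∑ j, a j * Real.exp (k j * x)) = Set.Ioi 0 := by
  set H : ℝ → ℝ := fun x => ∑ j, a j * Real.exp (k j * x) with hH
  have hd : ∀ x, HasStrictDerivAt H (∑ j, (a j * k j) * Real.exp (k j * x)) x := by
    intro x
    apply HasStrictDerivAt.fun_sum
    intro j _
    have h1 : HasStrictDerivAt (fun x : ℝ => k j * x) (k j) x := by
      simpa using (hasStrictDerivAt_id x).const_mul (k j)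
    have := (h1.exp).const_mul (a j)
    convert this using 1
    · rfl
    · ring
  have hpos : ∀ x, 0 < H x := by
    intro x
    apply Finset.sum_pos
    · intro j _
      exact mul_pos (ha j) (Real.exp_pos _)
    · exact Finset.univ_nonempty_iff.mpr ⟨⟨0, hN⟩⟩
  refine ⟨hd, hpos, ?_⟩
  have hcont : Continuous H := by
    apply continuous_finset_sum
    intro j _
    exact continuous_const.mul (Real.continuous_exp.comp (continuous_const.mul continuous_id))
  apply Set.Subset.antisymm
  · rintro y ⟨x, rfl⟩; exact hpos x
  · intro y hy
    have hbot : Tendsto H atBot (nhds 0) := by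
      have : Tendsto H atBot (nhds (∑ j : Fin N, (0:ℝ))) := by
        apply tendsto_finset_sum
        intro j _
        have h1 : Tendsto (fun x : ℝ => k j * x) atBot atBot :=
          (tendsto_id (α := ℝ)).const_mul_atBot (hk j)
        have := Real.tendsto_exp_atBot.comp h1
        simpa using this.const_mul (a j)
      simpa using this
    have htop : Tendsto H atTop atTop := by
      set i0 : Fin N := ⟨0, hN⟩
      have h1 : Tendsto (fun x : ℝ => a i0 * Real.exp (k i0 * x)) atTop atTop := by
        apply Tendsto.const_mul_atTop (ha i0)
        exact Real.tendsto_exp_atTop.comp ((tendsto_id (α := ℝ)).const_mul_atTop (hk i0))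
      apply tendsto_atTop_mono _ h1
      intro x
      apply Finset.single_le_sum (f := fun j => a j * Real.exp (k j * x)) _ (Finset.mem_univ i0)
      intro j _
      exact le_of_lt (mul_pos (ha j) (Real.exp_pos _))
    obtain ⟨A, hA⟩ := (hbot.eventually (gt_mem_nhds hy)).exists
    obtain ⟨C, hC⟩ := (htop.eventually_gt_atTop y).exists
    have hmem : y ∈ Set.Icc (H A) (H C) := ⟨le_of_lt hA, le_of_lt hC⟩
    exact intermediate_value_univ (f := H) A C hcont hmem

open Set Filter Function Real


theorem lls_S_diff {N : ℕ} (γ : Fin N → ℝ) (hγ : ∀ i, γ i ∈ Set.Ioo (0 : ℝ) 1)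
    (y y' : Fin N → ℝ) :
    |(1 / (N : ℝ)) * ∑ j, (1 - γ j) * γ j * y j -
      (1 / (N : ℝ)) * ∑ j, (1 - γ j) * γ j * y' j| ≤ ‖y - y'‖ / 4 := by
  rcases Nat.eq_zero_or_pos N with h0 | hN
  · subst h0
    simp [Finset.univ_eq_empty]
    positivity
  have hquarter : ∀ j, |(1 - γ j) * γ j| ≤ 1 / 4 := by
    intro j
    obtain ⟨h1, h2⟩ := hγ j
    rw [abs_of_nonneg (by nlinarith)]
    nlinarith [sq_nonneg (1 - 2*γ j)]
  have hcomp : ∀ j : Fin N, |y j - y' j| ≤ ‖y - y'‖ := by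
    intro j
    have := norm_le_pi_norm (y - y') j
    simpa using this
  calc |(1 / (N : ℝ)) * ∑ j, (1 - γ j) * γ j * y j -
      (1 / (N : ℝ)) * ∑ j, (1 - γ j) * γ j * y' j|
      = (1 / (N : ℝ)) * |∑ j, (1 - γ j) * γ j * (y j - y' j)| := by
        rw [← mul_sub, abs_mul, abs_of_nonneg (by positivity)]
        congr 2
        rw [← Finset.sum_sub_distrib]
        congr 1; ext j; ring
    _ ≤ (1 / (N : ℝ)) * ∑ j, |(1 - γ j) * γ j * (y j - y' j)| := by
        gcongr
        exact Finset.abs_sum_le_sum_abs _ _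
    _ ≤ (1 / (N : ℝ)) * ∑ j : Fin N, (1 / 4) * ‖y - y'‖ := by
        gcongr with j
        rw [abs_mul]
        exact mul_le_mul (hquarter j) (hcomp j) (abs_nonneg _) (by norm_num)
    _ = (1 / (N : ℝ)) * ((N : ℝ) * ((1 / 4) * ‖y - y'‖)) := by
        rw [Finset.sum_const, Finset.card_univ, Fintype.card_fin, nsmul_eq_mul]
    _ ≤ ‖y - y'‖ / 4 := by
        rw [← mul_assoc, one_div, inv_mul_cancel₀ (by positivity : (N:ℝ) ≠ 0)]
        ring_nf
        exact le_refl _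


theorem lls_lipschitz {N : ℕ} (γ : Fin N → ℝ) (hγ : ∀ i, γ i ∈ Set.Ioo (0 : ℝ) 1)
    (r Zt c R Zb : ℝ) (hr : 0 < r) (hc : 0 < c) (hR : 0 ≤ R) (hZb : 0 ≤ Zb)
    (hZt : |Zt| ≤ Zb) :
    LipschitzOnWith (Real.toNNReal (r + Zb * (1 / c + R / (4 * c ^ 2))))
      (fun y : Fin N → ℝ => fun i =>
        r * y i + γ i * y i * Zt / ((1 / (N : ℝ)) * ∑ j, (1 - γ j) * γ j * y j))
      {y : Fin N → ℝ | c ≤ (1 / (N : ℝ)) * ∑ j, (1 - γ j) * γ j * y j ∧ ‖y‖ ≤ R} := by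
  set S : (Fin N → ℝ) → ℝ := fun y => (1 / (N : ℝ)) * ∑ j, (1 - γ j) * γ j * y j with hS
  set K : ℝ := r + Zb * (1 / c + R / (4 * c ^ 2)) with hK
  have hK0 : 0 ≤ K := by positivity
  apply LipschitzOnWith.of_dist_le_mul
  rintro y ⟨hSy, hny⟩ y' ⟨hSy', hny'⟩
  rw [Real.coe_toNNReal _ hK0]
  have hD : dist y y' = ‖y - y'‖ := dist_eq_norm y y'
  set D : ℝ := ‖y - y'‖ with hDdef
  have hD0 : 0 ≤ D := norm_nonneg _
  rw [hD]
  rw [dist_pi_le_iff (by positivity)]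
  intro i
  have hS1 : (0:ℝ) < S y := lt_of_lt_of_le hc hSy
  have hS2 : (0:ℝ) < S y' := lt_of_lt_of_le hc hSy'
  have hΔi : |y i - y' i| ≤ D := by
    have := norm_le_pi_norm (y - y') i
    simpa using this
  have hyi' : |y' i| ≤ R := le_trans (by simpa using norm_le_pi_norm y' i) hny'
  have hSdiff : |S y' - S y| ≤ D / 4 := by
    have := lls_S_diff γ hγ y' y
    simpa [hS, show ‖y' - y‖ = D by rw [hDdef]; exact norm_sub_rev y' y] using this
  have hγi : |γ i| ≤ 1 := by
    obtain ⟨h1, h2⟩ := hγ i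
    rw [abs_of_pos h1]; linarith
  rw [Real.dist_eq]
  have hkey : r * y i + γ i * y i * Zt / S y - (r * y' i + γ i * y' i * Zt / S y') =
      r * (y i - y' i) + γ i * Zt * ((y i - y' i) / S y + y' i * (S y' - S y) / (S y * S y')) := by
    field_simp
    ring
  rw [hkey]
  have h1 : |(y i - y' i) / S y| ≤ D / c :=
    (abs_div _ _).le.trans (by
      rw [abs_of_pos hS1]
      exact div_le_div₀ hD0 hΔi hc hSy)
  have h2 : |y' i * (S y' - S y) / (S y * S y')| ≤ R * (D / 4) / (c * c) := by
    rw [abs_div, abs_mul, abs_of_pos (mul_pos hS1 hS2)]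
    apply div_le_div₀ (by positivity) _ (by positivity) (mul_le_mul hSy hSy' (le_of_lt hc) (le_of_lt hS1))
    exact mul_le_mul hyi' hSdiff (abs_nonneg _) hR
  calc |r * (y i - y' i) + γ i * Zt * ((y i - y' i) / S y + y' i * (S y' - S y) / (S y * S y'))|
      ≤ r * |y i - y' i| + |γ i| * |Zt| * (|(y i - y' i) / S y| + |y' i * (S y' - S y) / (S y * S y')|) := by
        refine (abs_add_le _ _).trans ?_
        have e1 : |r * (y i - y' i)| = r * |y i - y' i| := by
          rw [abs_mul, abs_of_pos hr]
        have e2 : |γ i * Zt * ((y i - y' i) / S y + y' i * (S y' - S y) / (S y * S y'))| ≤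
            |γ i| * |Zt| * (|(y i - y' i) / S y| + |y' i * (S y' - S y) / (S y * S y')|) := by
          rw [abs_mul, abs_mul]
          exact mul_le_mul_of_nonneg_left (abs_add_le _ _) (by positivity)
        rw [e1]
        exact add_le_add le_rfl e2
    _ ≤ r * D + 1 * Zb * (D / c + R * (D / 4) / (c * c)) := by
        gcongr
    _ = K * D := by
        rw [hK]
        field_simp


open Set Filter Function Real in
/-- Global existence and uniqueness for the explicit reformulation of the
simplified Levy-Levy-Solomon wealth ODE system, together with the lower bound
on the weighted wealth sum appearing in the denominator. -/
theorem lls_global_wellposedness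
    (N : ℕ) (hN : 0 < N) (r B : ℝ) (hr : 0 < r) (hB : 0 < B)
    (Z : ℝ → ℝ) (hZreg : ContDiff ℝ 1 Z)
    (hZnn : ∀ t, 0 ≤ t → 0 ≤ Z t) (hZ' : ∀ t, 0 ≤ t → |deriv Z t| ≤ B)
    (γ : Fin N → ℝ) (hγ : ∀ i, γ i ∈ Set.Ioo (0 : ℝ) 1)
    (w0 : Fin N → ℝ) (hw0 : ∀ i, 0 < w0 i) :
    ∃ w : ℝ → Fin N → ℝ,
      ((∀ i, w 0 i = w0 i) ∧
        (∀ t, 0 ≤ t → ∀ i, HasDerivAt (fun s => w s i)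
          (r * w t i + γ i * w t i * Z t /
            ((1 / (N : ℝ)) * ∑ j, (1 - γ j) * γ j * w t j)) t)) ∧
      (∀ w' : ℝ → Fin N → ℝ,
        ((∀ i, w' 0 i = w0 i) ∧
          (∀ t, 0 ≤ t → ∀ i, HasDerivAt (fun s => w' s i)
            (r * w' t i + γ i * w' t i * Z t /
              ((1 / (N : ℝ)) * ∑ j, (1 - γ j) * γ j * w' t j)) t)) →
        ∀ t, 0 ≤ t → ∀ i, w' t i = w t i) ∧
      (0 < (1 / (N : ℝ)) * ∑ j, (1 - γ j) * γ j * w0 j) ∧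
      (∀ t, 0 ≤ t →
        (1 / (N : ℝ)) * ∑ j, (1 - γ j) * γ j * w0 j ≤
          (1 / (N : ℝ)) * ∑ j, (1 - γ j) * γ j * w t j) := by
  have hγpos : ∀ i, 0 < γ i := fun i => (hγ i).1
  have hγlt : ∀ i, γ i < 1 := fun i => (hγ i).2
  have hNpos : (0:ℝ) < N := by exact_mod_cast hN
  -- coefficients
  set cs : Fin N → ℝ := fun j => (1 - γ j) * γ j * w0 j with hcs
  have hcspos : ∀ j, 0 < cs j := fun j =>
    mul_pos (mul_pos (by linarith [hγlt j]) (hγpos j)) (hw0 j)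
  set aH : Fin N → ℝ := fun j => cs j / (γ j * N) with haH
  set aF : Fin N → ℝ := fun j => cs j / N with haF
  have haHpos : ∀ j, 0 < aH j := fun j => div_pos (hcspos j) (mul_pos (hγpos j) hNpos)
  have haFpos : ∀ j, 0 < aF j := fun j => div_pos (hcspos j) hNpos
  set H : ℝ → ℝ := fun x => ∑ j, aH j * Real.exp (γ j * x) with hHdef
  set F : ℝ → ℝ := fun x => ∑ j, aF j * Real.exp (γ j * x) with hFdef
  obtain ⟨hHd0, hHpos, hHrange⟩ := lls_exp_sum_aux hN aH γ haHpos hγpos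
  obtain ⟨-, hFpos, -⟩ := lls_exp_sum_aux hN aF γ haFpos hγpos
  have hHd : ∀ x, HasStrictDerivAt H (F x) x := by
    intro x
    have heq : (∑ j, (aH j * γ j) * Real.exp (γ j * x)) = F x := by
      apply Finset.sum_congr rfl
      intro j _
      have : aH j * γ j = aF j := by
        have hγj : γ j ≠ 0 := (hγpos j).ne'
        have hNne : (N:ℝ) ≠ 0 := hNpos.ne'
        rw [haH, haF]
        field_simp
      rw [this]
    rw [← heq]
    exact hHd0 x
  obtain ⟨hleft, hright, hinvd⟩ := lls_inv_aux H F hHd hFpos hHrange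
  have hHmono : StrictMono H := by
    apply strictMono_of_deriv_pos
    intro x
    rw [(hHd x).hasDerivAt.deriv]
    exact hFpos x
  -- the function v
  have hZc : Continuous Z := hZreg.continuous
  have hintc : Continuous fun s : ℝ => Real.exp (-(r * s)) * Z s := by
    exact (Real.continuous_exp.comp (continuous_const.mul continuous_id).neg).mul hZc
  set v : ℝ → ℝ := fun t => H 0 + ∫ s in (0:ℝ)..t, Real.exp (-(r * s)) * Z s with hvdef
  have hvd : ∀ t, HasDerivAt v (Real.exp (-(r * t)) * Z t) t := by
    intro t
    have := intervalIntegral.integral_hasDerivAt_right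
      (f := fun s : ℝ => Real.exp (-(r * s)) * Z s)
      (hintc.intervalIntegrable 0 t)
      (hintc.stronglyMeasurableAtFilter _ _)
      hintc.continuousAt
    exact this.const_add (H 0)
  have hv0 : v 0 = H 0 := by simp [hvdef]
  have hvge : ∀ t, 0 ≤ t → H 0 ≤ v t := by
    intro t ht
    have : 0 ≤ ∫ s in (0:ℝ)..t, Real.exp (-(r * s)) * Z s := by
      apply intervalIntegral.integral_nonneg ht
      intro u hu
      exact mul_nonneg (le_of_lt (Real.exp_pos _)) (hZnn u hu.1)
    simp only [hvdef]
    linarith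
  have hvpos : ∀ t, 0 ≤ t → 0 < v t := fun t ht => lt_of_lt_of_le (hHpos 0) (hvge t ht)
  -- φ
  set φ : ℝ → ℝ := fun t => Function.invFun H (v t) with hφdef
  have hφ0 : φ 0 = 0 := by rw [hφdef]; simp only; rw [hv0, hleft 0]
  have hφd : ∀ t, 0 ≤ t →
      HasDerivAt φ ((F (φ t))⁻¹ * (Real.exp (-(r * t)) * Z t)) t := by
    intro t ht
    exact (hinvd (v t) (hvpos t ht)).comp t (hvd t)
  have hφnn : ∀ t, 0 ≤ t → 0 ≤ φ t := by
    intro t ht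
    have h1 : H (φ t) = v t := hright (v t) (hvpos t ht)
    have h2 : H 0 ≤ H (φ t) := by rw [h1]; exact hvge t ht
    exact (hHmono.le_iff_le).mp h2
  -- the solution w
  set w : ℝ → Fin N → ℝ := fun t i => w0 i * Real.exp (r * t + γ i * φ t) with hwdef
  have hw0eq : ∀ i, w 0 i = w0 i := by
    intro i
    rw [hwdef]
    simp [hφ0]
  -- denominator identity
  have hSid : ∀ t, (1 / (N : ℝ)) * ∑ j, (1 - γ j) * γ j * w t j
      = Real.exp (r * t) * F (φ t) := by
    intro t
    rw [hFdef]
    simp only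
    rw [Finset.mul_sum, Finset.mul_sum]
    apply Finset.sum_congr rfl
    intro j _
    rw [hwdef]
    simp only
    rw [Real.exp_add, haF, hcs]
    ring
  have hSpos : ∀ t, 0 < Real.exp (r * t) * F (φ t) :=
    fun t => mul_pos (Real.exp_pos _) (hFpos _)
  -- the ODE for w
  have hwODE : ∀ t, 0 ≤ t → ∀ i, HasDerivAt (fun s => w s i)
      (r * w t i + γ i * w t i * Z t /
        ((1 / (N : ℝ)) * ∑ j, (1 - γ j) * γ j * w t j)) t := by
    intro t ht i
    have hin : HasDerivAt (fun s => r * s + γ i * φ s)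
        (r + γ i * ((F (φ t))⁻¹ * (Real.exp (-(r * t)) * Z t))) t := by
      have h1 : HasDerivAt (fun s : ℝ => r * s) r t := by
        simpa using (hasDerivAt_id t).const_mul r
      exact h1.add ((hφd t ht).const_mul (γ i))
    have hder : HasDerivAt (fun s => w s i)
        (w0 i * (Real.exp (r * t + γ i * φ t) *
          (r + γ i * ((F (φ t))⁻¹ * (Real.exp (-(r * t)) * Z t))))) t := by
      rw [hwdef]
      exact (hin.exp).const_mul (w0 i)
    have heq : w0 i * (Real.exp (r * t + γ i * φ t) *
          (r + γ i * ((F (φ t))⁻¹ * (Real.exp (-(r * t)) * Z t))))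
        = r * w t i + γ i * w t i * Z t /
          ((1 / (N : ℝ)) * ∑ j, (1 - γ j) * γ j * w t j) := by
      rw [hSid t, hwdef]
      simp only
      rw [Real.exp_neg]
      have h1 : Real.exp (r * t) ≠ 0 := Real.exp_ne_zero _
      have h2 : F (φ t) ≠ 0 := (hFpos _).ne'
      field_simp
    rw [heq] at hder
    exact hder
  -- positivity of initial denominator
  have hS0pos : 0 < (1 / (N : ℝ)) * ∑ j, (1 - γ j) * γ j * w0 j := by
    apply mul_pos (by positivity)
    apply Finset.sum_pos
    · intro j _
      exact hcspos j
    · exact Finset.univ_nonempty_iff.mpr ⟨⟨0, hN⟩⟩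
  -- monotone lower bound
  have hF0eq : (1 / (N : ℝ)) * ∑ j, (1 - γ j) * γ j * w0 j = F 0 := by
    rw [hFdef]
    simp only
    rw [Finset.mul_sum]
    apply Finset.sum_congr rfl
    intro j _
    rw [haF, hcs]
    simp
    ring
  have hmonoS : ∀ t, 0 ≤ t →
      (1 / (N : ℝ)) * ∑ j, (1 - γ j) * γ j * w0 j ≤
        (1 / (N : ℝ)) * ∑ j, (1 - γ j) * γ j * w t j := by
    intro t ht
    rw [hSid t, hF0eq]
    have h1 : F 0 ≤ F (φ t) := by
      rw [hFdef]
      simp only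
      apply Finset.sum_le_sum
      intro j _
      have h2 : Real.exp (γ j * 0) ≤ Real.exp (γ j * φ t) := by
        apply Real.exp_le_exp.mpr
        have := hφnn t ht
        nlinarith [hγpos j]
      exact mul_le_mul_of_nonneg_left h2 (haFpos j).le
    calc F 0 = 1 * F 0 := (one_mul _).symm
      _ ≤ Real.exp (r * t) * F (φ t) :=
          mul_le_mul (Real.one_le_exp (by positivity)) h1 (hFpos 0).le (Real.exp_pos _).le
  -- continuity of w as a Pi-valued map
  have hwc : ∀ t, 0 ≤ t → ContinuousAt w t := by
    intro t ht
    exact continuousAt_pi.mpr fun i => (hwODE t ht i).continuousAt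
  -- uniqueness
  have huniq : ∀ w' : ℝ → Fin N → ℝ,
      ((∀ i, w' 0 i = w0 i) ∧
        (∀ t, 0 ≤ t → ∀ i, HasDerivAt (fun s => w' s i)
          (r * w' t i + γ i * w' t i * Z t /
            ((1 / (N : ℝ)) * ∑ j, (1 - γ j) * γ j * w' t j)) t)) →
      ∀ t, 0 ≤ t → ∀ i, w' t i = w t i := by
    rintro w' ⟨hi', hd'⟩
    have hw'c : ∀ t, 0 ≤ t → ContinuousAt w' t := by
      intro t ht
      exact continuousAt_pi.mpr fun i => (hd' t ht i).continuousAt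
    by_contra hcon
    push_neg at hcon
    obtain ⟨t₀, ht₀, i₀, hne₀⟩ := hcon
    set A : Set ℝ := {t | 0 ≤ t ∧ w' t ≠ w t} with hA
    have hAne : A.Nonempty := ⟨t₀, ht₀, fun h => hne₀ (congrFun h i₀)⟩
    have hbdd : BddBelow A := ⟨0, fun a ha => ha.1⟩
    set τ := sInf A with hτdef
    have hτ0 : 0 ≤ τ := le_csInf hAne fun a ha => ha.1
    have hagree : ∀ s, 0 ≤ s → s < τ → w' s = w s := by
      intro s h1 h2
      by_contra h
      exact absurd (csInf_le hbdd ⟨h1, h⟩) (not_le.mpr h2)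
    have hτeq : w' τ = w τ := by
      rcases eq_or_lt_of_le hτ0 with h0 | h0
      · funext i
        rw [← h0, hi' i, hw0eq i]
      · have hclos : τ ∈ closure (Set.Ico 0 τ) := by
          rw [closure_Ico h0.ne]
          exact ⟨hτ0, le_refl τ⟩
        have hneb : (nhdsWithin τ (Set.Ico 0 τ)).NeBot :=
          mem_closure_iff_nhdsWithin_neBot.mp hclos
        have ht1 : Filter.Tendsto (fun s => w' s - w s) (nhdsWithin τ (Set.Ico 0 τ))
            (nhds (w' τ - w τ)) :=
          ((hw'c τ hτ0).sub (hwc τ hτ0)).continuousWithinAt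
        have ht2 : Filter.Tendsto (fun s => w' s - w s) (nhdsWithin τ (Set.Ico 0 τ))
            (nhds 0) := by
          apply Filter.Tendsto.congr' _ tendsto_const_nhds
          filter_upwards [self_mem_nhdsWithin] with s hs
          rw [hagree s hs.1 hs.2, sub_self]
        exact sub_eq_zero.mp (tendsto_nhds_unique ht1 ht2)
    -- parameters for the local uniqueness argument
    set Sτ := Real.exp (r * τ) * F (φ τ) with hSτ
    have hSτpos : 0 < Sτ := hSpos τ
    have hSwτ : (1 / (N : ℝ)) * ∑ j, (1 - γ j) * γ j * w τ j = Sτ := hSid τ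
    set Zb : ℝ := |Z τ| + B with hZb
    have hZb0 : 0 ≤ Zb := by positivity
    have hZbd : ∀ t, t ∈ Set.Icc τ (τ + 1) → |Z t| ≤ Zb := by
      intro t ht
      have hdl : ∀ x ∈ Set.Icc τ (τ + 1),
          HasDerivWithinAt Z (deriv Z x) (Set.Icc τ (τ + 1)) x := fun x _ =>
        ((hZreg.differentiable one_ne_zero).differentiableAt.hasDerivAt).hasDerivWithinAt
      have hbnd : ∀ x ∈ Set.Icc τ (τ + 1), ‖deriv Z x‖ ≤ B := fun x hx =>
        hZ' x (le_trans hτ0 hx.1)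
      have habs := (convex_Icc τ (τ + 1)).norm_image_sub_le_of_norm_hasDerivWithin_le hdl hbnd
        (Set.left_mem_Icc.mpr (by linarith)) ht
      have h1 : |t - τ| ≤ 1 := by
        rw [abs_of_nonneg (by linarith [ht.1])]
        linarith [ht.2]
      have h2 : |Z t - Z τ| ≤ B * |t - τ| := habs
      calc |Z t| = |Z τ + (Z t - Z τ)| := by ring_nf
        _ ≤ |Z τ| + |Z t - Z τ| := abs_add_le _ _
        _ ≤ |Z τ| + B * 1 := by
            refine add_le_add le_rfl (h2.trans ?_)
            exact mul_le_mul_of_nonneg_left h1 hB.le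
        _ = Zb := by rw [hZb]; ring
    set Rb : ℝ := ‖w τ‖ + Sτ with hRb
    have hRb0 : 0 ≤ Rb := by positivity
    set sset : Set (Fin N → ℝ) :=
      {y : Fin N → ℝ | Sτ / 2 ≤ (1 / (N : ℝ)) * ∑ j, (1 - γ j) * γ j * y j ∧ ‖y‖ ≤ Rb}
      with hsset
    have hball : ∀ y : Fin N → ℝ, ‖y - w τ‖ ≤ Sτ → y ∈ sset := by
      intro y hy
      constructor
      · have hd1 := lls_S_diff γ hγ y (w τ)
        rw [hSwτ] at hd1
        have hd2 := (abs_le.mp hd1).1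
        linarith
      · have hy2 : w τ + (y - w τ) = y := by abel
        calc ‖y‖ = ‖w τ + (y - w τ)‖ := by rw [hy2]
          _ ≤ ‖w τ‖ + ‖y - w τ‖ := norm_add_le _ _
          _ ≤ Rb := by rw [hRb]; linarith
    -- eventual closeness
    have hnear : ∀ᶠ t in nhds τ, ‖w t - w τ‖ ≤ Sτ ∧ ‖w' t - w τ‖ ≤ Sτ := by
      have h5 : Filter.Tendsto (fun t => ‖w t - w τ‖) (nhds τ) (nhds 0) := by
        have h50 : Filter.Tendsto w (nhds τ) (nhds (w τ)) := hwc τ hτ0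
        have := (h50.sub (tendsto_const_nhds (x := w τ))).norm
        simpa using this
      have h6 : Filter.Tendsto (fun t => ‖w' t - w τ‖) (nhds τ) (nhds 0) := by
        have h60 : Filter.Tendsto w' (nhds τ) (nhds (w' τ)) := hw'c τ hτ0
        rw [hτeq] at h60
        have := (h60.sub (tendsto_const_nhds (x := w τ))).norm
        simpa using this
      filter_upwards [h5.eventually (gt_mem_nhds hSτpos),
        h6.eventually (gt_mem_nhds hSτpos)] with t h8 h9
      exact ⟨h8.le, h9.le⟩
    obtain ⟨δ, hδpos, hδ⟩ := Metric.eventually_nhds_iff.mp hnear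
    set ε : ℝ := min (δ / 2) 1 with hε
    have hεpos : 0 < ε := lt_min (by linarith) one_pos
    set b : ℝ := τ + ε with hbdef
    have hbτ1 : b ≤ τ + 1 := by
      rw [hbdef]
      have := min_le_right (δ / 2) 1
      linarith
    have hclose : ∀ t, t ∈ Set.Icc τ b → ‖w t - w τ‖ ≤ Sτ ∧ ‖w' t - w τ‖ ≤ Sτ := by
      intro t ht
      apply hδ
      rw [Real.dist_eq, abs_of_nonneg (by linarith [ht.1])]
      have h1 : t - τ ≤ ε := by linarith [ht.2]
      have h2 : ε ≤ δ / 2 := min_le_left _ _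
      linarith
    set stime : ℝ → Set (Fin N → ℝ) := fun t =>
      if t ∈ Set.Icc τ b then sset else (∅ : Set (Fin N → ℝ)) with hstime
    set K : NNReal := Real.toNNReal (r + Zb * (1 / (Sτ / 2) + Rb / (4 * (Sτ / 2) ^ 2)))
      with hKdef
    have hlip : ∀ t, LipschitzOnWith K
        (fun y : Fin N → ℝ => fun i =>
          r * y i + γ i * y i * Z t / ((1 / (N : ℝ)) * ∑ j, (1 - γ j) * γ j * y j))
        (stime t) := by
      intro t
      by_cases ht : t ∈ Set.Icc τ b
      · rw [hstime]
        simp only [if_pos ht]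
        exact lls_lipschitz γ hγ r (Z t) (Sτ / 2) Rb Zb hr (by linarith) hRb0 hZb0
          (hZbd t ⟨ht.1, le_trans ht.2 hbτ1⟩)
      · rw [hstime]
        simp only [if_neg ht]
        exact lipschitzOnWith_empty _ _
    have hτb : τ ≤ b := by rw [hbdef]; linarith
    have heqs : Set.EqOn w' w (Set.Icc τ b) := by
      apply ODE_solution_unique_of_mem_Icc_right (fun t _ => hlip t)
      · exact fun t ht => (hw'c t (le_trans hτ0 ht.1)).continuousWithinAt
      · intro t ht
        exact (hasDerivAt_pi.mpr fun i => hd' t (le_trans hτ0 ht.1) i).hasDerivWithinAt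
      · intro t ht
        rw [hstime]
        simp only [if_pos (Set.mem_Icc.mpr ⟨ht.1, ht.2.le⟩)]
        exact hball _ (hclose t ⟨ht.1, ht.2.le⟩).2
      · exact fun t ht => (hwc t (le_trans hτ0 ht.1)).continuousWithinAt
      · intro t ht
        exact (hasDerivAt_pi.mpr fun i => hwODE t (le_trans hτ0 ht.1) i).hasDerivWithinAt
      · intro t ht
        rw [hstime]
        simp only [if_pos (Set.mem_Icc.mpr ⟨ht.1, ht.2.le⟩)]
        exact hball _ (hclose t ⟨ht.1, ht.2.le⟩).1
      · exact hτeq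
    have hbelow : ∀ a ∈ A, b ≤ a := by
      intro a ha
      by_contra hle
      push_neg at hle
      have hτa : τ ≤ a := csInf_le hbdd ha
      exact ha.2 (heqs ⟨hτa, hle.le⟩)
    have : b ≤ τ := le_csInf hAne hbelow
    rw [hbdef] at this
    linarith
  exact ⟨w, ⟨hw0eq, hwODE⟩, huniq, hS0pos, hmonoS⟩
end

section
/- Let r > 0 and Z : [0,∞) → ℝ_{≥0} continuous, and let A : [0,∞) → ℝ_{>0} be continuous. Define B(t,γ) = ∫₀ᵗ (r + γ·Z(s)/A(s)) ds + c̃ for γ ∈ (0,1). Then the function f(t,w,γ) = (c/w)·exp(−(ln w − B(t,γ))²), for w > 0, satisfies the transport equation ∂ₜ f(t,w,γ) + ∂_w((r·w + γ·w·Z(t)/A(t))·f(t,w,γ)) = 0 pointwise. -/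
open intervalIntegral

/-- Verification of the explicit log-normal-type solution ansatz for the
mean-field Levy-Levy-Solomon transport equation with prescribed positive
coefficient `A(t)`: the function `f(t,w,γ) = (c/w)·exp(−(ln w − B(t,γ))²)`
with `B(t,γ) = ∫₀ᵗ (r + γZ(s)/A(s)) ds + c̃` satisfies
`∂ₜ f + ∂_w((r·w + γ·w·Z(t)/A(t))·f) = 0` pointwise. -/
theorem lls_lognormal_ansatz
    (r c ctilde : ℝ) (hr : 0 < r) (hc : 0 < c)
    (Z A : ℝ → ℝ) (hZ : Continuous Z) (hZnn : ∀ t, 0 ≤ t → 0 ≤ Z t)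
    (hA : Continuous A) (hApos : ∀ t, 0 ≤ t → 0 < A t)
    (B : ℝ → ℝ → ℝ)
    (hB : ∀ t γ, B t γ = (∫ s in (0 : ℝ)..t, (r + γ * Z s / A s)) + ctilde)
    (f : ℝ → ℝ → ℝ → ℝ)
    (hf : ∀ t w γ, f t w γ = c / w * Real.exp (-(Real.log w - B t γ) ^ 2)) :
    ∀ t, 0 ≤ t → ∀ w, 0 < w → ∀ γ ∈ Set.Ioo (0 : ℝ) 1,
      deriv (fun τ => f τ w γ) t +
        deriv (fun x => (r * x + γ * x * Z t / A t) * f t x γ) w = 0 := by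
  intro t ht w hw γ hγ
  set φ : ℝ → ℝ := fun s => r + γ * Z s / A s with hφ
  set k : ℝ := r + γ * Z t / A t with hk
  set b : ℝ := B t γ with hb
  set L : ℝ := Real.log w with hL
  -- derivative of t ↦ B t γ
  have hint : IntervalIntegrable φ MeasureTheory.volume 0 t := by
    apply ContinuousOn.intervalIntegrable
    rw [Set.uIcc_of_le ht]
    exact continuousOn_const.add ((hZ.continuousOn.const_smul γ).div hA.continuousOn
      (fun s hs => (hApos s hs.1).ne'))
  have hmeas : StronglyMeasurableAtFilter φ (nhds t) := by
    have : Measurable φ :=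
      measurable_const.add ((hZ.measurable.const_mul γ).div hA.measurable)
    exact this.stronglyMeasurable.stronglyMeasurableAtFilter
  have hcont : ContinuousAt φ t :=
    continuousAt_const.add ((hZ.continuousAt.const_mul γ).div hA.continuousAt
      (hApos t ht).ne')
  have hBd : HasDerivAt (fun τ => B τ γ) k t := by
    have h := intervalIntegral.integral_hasDerivAt_right hint hmeas hcont
    have heq : (fun τ => B τ γ) = fun τ => (∫ s in (0:ℝ)..τ, φ s) + ctilde := by
      funext τ; exact hB τ γ
    rw [heq]
    exact h.add_const ctilde
  -- time derivative of f
  have hFt : HasDerivAt (fun τ => f τ w γ) (2 * (L - b) * k * f t w γ) t := by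
    have heq : (fun τ => f τ w γ) = fun τ => c / w * Real.exp (-(L - B τ γ) ^ 2) := by
      funext τ; exact hf τ w γ
    rw [heq]
    have hu : HasDerivAt (fun τ => -(L - B τ γ) ^ 2)
        (-(2 * (L - b) ^ 1 * (0 - k))) t :=
      (((hasDerivAt_const t L).sub hBd).pow 2).neg
    have := (hu.exp).const_mul (c / w)
    convert this using 1
    rfl
    rfl
    rw [hf t w γ]
    ring
  -- space derivative
  have hFw : HasDerivAt (fun x => (r * x + γ * x * Z t / A t) * f t x γ)
      (-(2 * (L - b) * k) * f t w γ) w := by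
    have hln : HasDerivAt Real.log w⁻¹ w := Real.hasDerivAt_log hw.ne'
    have hG := ((((hln.sub_const b).pow 2).neg).exp).const_mul (k * c)
    have hev : (fun x => k * c * Real.exp (-(Real.log x - b) ^ 2)) =ᶠ[nhds w]
        (fun x => (r * x + γ * x * Z t / A t) * f t x γ) := by
      filter_upwards [eventually_gt_nhds hw] with x hx
      rw [hf t x γ]
      field_simp
      ring
    have h2 := hG.congr_of_eventuallyEq hev.symm
    convert h2 using 1
    rfl
    rfl
    rw [hf t w γ]
    push_cast
    field_simp
    simp only [Pi.neg_apply, Pi.pow_apply]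
    rw [hL, hb]
    ring
  rw [hFt.deriv, hFw.deriv]
  ring
end
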